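/- Let D : Ω → ℝ be C¹ with D ≥ C₀ > 0 on an open set Ω ⊂ ℝ², and let (x(u,v), y(u,v)) be a C² diffeomorphism satisfying the first-order relations √D x_u = h₁₂ x_v + h₂₂ y_v and √D x_v = −h₁₂ x_u − h₂₂ y_u, where h₁₂, h₂₂ are C¹ functions of (x,y). Then Δx = x_{uu} + x_{vv} = ((h₂₂/√D)_x − (h₁₂/√D)_y) · J(x,y), where J(x,y) = x_u y_v − x_v y_u and subscripts x, y denote partial derivatives in the (x,y)-variables. -/

import Mathlib

private lemma heinz_clm_pair (L : ℝ × ℝ →L[ℝ] ℝ) (p q : ℝ) :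
    L (p, q) = p * L (1, 0) + q * L (0, 1) := by
  have h : ((p, q) : ℝ × ℝ) = p • ((1:ℝ), (0:ℝ)) + q • ((0:ℝ), (1:ℝ)) := by simp
  rw [h, map_add, map_smul, map_smul, smul_eq_mul, smul_eq_mul]

private lemma heinz_fderiv_apply_const {c : ℝ × ℝ → (ℝ × ℝ →L[ℝ] ℝ)} {w : ℝ × ℝ}
    (hc : DifferentiableAt ℝ c w) (v u : ℝ × ℝ) :
    fderiv ℝ (fun w' => c w' v) w u = fderiv ℝ c w u v := by
  rw [fderiv_clm_apply hc (differentiableAt_const v)]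
  simp

private lemma heinz_fderiv_mul_apply {c d : ℝ × ℝ → ℝ} {w u : ℝ × ℝ}
    (hc : DifferentiableAt ℝ c w) (hd : DifferentiableAt ℝ d w) :
    fderiv ℝ (fun w' => c w' * d w') w u
      = fderiv ℝ c w u * d w + c w * fderiv ℝ d w u := by
  rw [fderiv_fun_mul hc hd]
  simp only [ContinuousLinearMap.add_apply, ContinuousLinearMap.smul_apply, smul_eq_mul]
  ring

/-- Heinz's computation: if `(x, y)` is a `C²` diffeomorphism of a planar domain `Ω`
onto `Ω'` satisfying `√D x_u = h₁₂ x_v + h₂₂ y_v` and `√D x_v = −h₁₂ x_u − h₂₂ y_u`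
(with `D, h₁₂, h₂₂` being `C¹` functions of the image variables `(x,y)` and
`D ≥ C₀ > 0`), then `Δx = ((h₂₂/√D)_x − (h₁₂/√D)_y) · J(x,y)`, where
`J(x,y) = x_u y_v − x_v y_u`. -/
theorem heinz_laplacian_identity
    (Ω Ω' : Set (ℝ × ℝ)) (hΩ : IsOpen Ω) (hΩ' : IsOpen Ω')
    (x y : ℝ × ℝ → ℝ) (h₁₂ h₂₂ D : ℝ × ℝ → ℝ) (C₀ : ℝ) (hC₀ : 0 < C₀)
    (hx : ContDiffOn ℝ 2 x Ω) (hy : ContDiffOn ℝ 2 y Ω)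
    (hmaps : ∀ w ∈ Ω, (x w, y w) ∈ Ω')
    (hbij : Set.InjOn (fun w => (x w, y w)) Ω)
    (h12reg : ContDiffOn ℝ 1 h₁₂ Ω') (h22reg : ContDiffOn ℝ 1 h₂₂ Ω')
    (hDreg : ContDiffOn ℝ 1 D Ω')
    (hDpos : ∀ z ∈ Ω', C₀ ≤ D z)
    (hrel1 : ∀ w ∈ Ω,
      Real.sqrt (D (x w, y w)) * fderiv ℝ x w (1, 0)
        = h₁₂ (x w, y w) * fderiv ℝ x w (0, 1) + h₂₂ (x w, y w) * fderiv ℝ y w (0, 1))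
    (hrel2 : ∀ w ∈ Ω,
      Real.sqrt (D (x w, y w)) * fderiv ℝ x w (0, 1)
        = -(h₁₂ (x w, y w) * fderiv ℝ x w (1, 0)) - h₂₂ (x w, y w) * fderiv ℝ y w (1, 0)) :
    ∀ w ∈ Ω,
      fderiv ℝ (fun w' => fderiv ℝ x w' (1, 0)) w (1, 0)
        + fderiv ℝ (fun w' => fderiv ℝ x w' (0, 1)) w (0, 1)
      = (fderiv ℝ (fun z => h₂₂ z / Real.sqrt (D z)) (x w, y w) (1, 0)
          - fderiv ℝ (fun z => h₁₂ z / Real.sqrt (D z)) (x w, y w) (0, 1))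
        * (fderiv ℝ x w (1, 0) * fderiv ℝ y w (0, 1)
            - fderiv ℝ x w (0, 1) * fderiv ℝ y w (1, 0)) := by
  intro w hw
  set F : ℝ × ℝ → ℝ := fun z => h₁₂ z / Real.sqrt (D z) with hF
  set G : ℝ × ℝ → ℝ := fun z => h₂₂ z / Real.sqrt (D z) with hG
  have hzΩ' : (x w, y w) ∈ Ω' := hmaps w hw
  -- positivity of sqrt D on Ω'
  have hsne : ∀ p ∈ Ω', Real.sqrt (D p) ≠ 0 := fun p hp =>
    ne_of_gt (Real.sqrt_pos.mpr (lt_of_lt_of_le hC₀ (hDpos p hp)))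
  have hDne : ∀ p ∈ Ω', D p ≠ 0 := fun p hp =>
    ne_of_gt (lt_of_lt_of_le hC₀ (hDpos p hp))
  -- regularity of √D, F, G on Ω'
  have hsC : ContDiffOn ℝ 1 (fun p => Real.sqrt (D p)) Ω' := fun p hp =>
    (Real.contDiffAt_sqrt (hDne p hp)).comp_contDiffWithinAt p (hDreg p hp)
  have hFC : ContDiffOn ℝ 1 F Ω' := h12reg.div hsC hsne
  have hGC : ContDiffOn ℝ 1 G Ω' := h22reg.div hsC hsne
  -- pointwise relations after dividing by √D
  have eq1 : ∀ w' ∈ Ω, fderiv ℝ x w' (1, 0)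
      = F (x w', y w') * fderiv ℝ x w' (0, 1) + G (x w', y w') * fderiv ℝ y w' (0, 1) := by
    intro w' hw'
    have h := hrel1 w' hw'
    have hs := hsne _ (hmaps w' hw')
    simp only [hF, hG]
    rw [div_mul_eq_mul_div, div_mul_eq_mul_div, ← add_div, eq_div_iff hs]
    linear_combination h
  have eq2 : ∀ w' ∈ Ω, fderiv ℝ x w' (0, 1)
      = -(F (x w', y w') * fderiv ℝ x w' (1, 0)) - G (x w', y w') * fderiv ℝ y w' (1, 0) := by
    intro w' hw'
    have h := hrel2 w' hw'
    have hs := hsne _ (hmaps w' hw')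
    simp only [hF, hG]
    rw [div_mul_eq_mul_div, div_mul_eq_mul_div, ← neg_div, ← sub_div, eq_div_iff hs]
    linear_combination h
  -- differentiability at w
  have hxw : ContDiffAt ℝ 2 x w := hx.contDiffAt (hΩ.mem_nhds hw)
  have hyw : ContDiffAt ℝ 2 y w := hy.contDiffAt (hΩ.mem_nhds hw)
  have hxd : DifferentiableAt ℝ x w := hxw.differentiableAt two_ne_zero
  have hyd : DifferentiableAt ℝ y w := hyw.differentiableAt two_ne_zero
  have hx' : DifferentiableAt ℝ (fderiv ℝ x) w :=
    ((hx.fderiv_of_isOpen hΩ (by norm_num : (1 : WithTop ℕ∞) + 1 ≤ 2)).contDiffAt (hΩ.mem_nhds hw)).differentiableAt one_ne_zero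
  have hy' : DifferentiableAt ℝ (fderiv ℝ y) w :=
    ((hy.fderiv_of_isOpen hΩ (by norm_num : (1 : WithTop ℕ∞) + 1 ≤ 2)).contDiffAt (hΩ.mem_nhds hw)).differentiableAt one_ne_zero
  have hφd : DifferentiableAt ℝ (fun w' => (x w', y w')) w := hxd.prodMk hyd
  have hφ : fderiv ℝ (fun w' => (x w', y w')) w = (fderiv ℝ x w).prod (fderiv ℝ y w) :=
    (hxd.hasFDerivAt.prodMk hyd.hasFDerivAt).fderiv
  have hFz : DifferentiableAt ℝ F (x w, y w) :=
    (hFC.contDiffAt (hΩ'.mem_nhds hzΩ')).differentiableAt one_ne_zero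
  have hGz : DifferentiableAt ℝ G (x w, y w) :=
    (hGC.contDiffAt (hΩ'.mem_nhds hzΩ')).differentiableAt one_ne_zero
  have hFφ : DifferentiableAt ℝ (fun w' => F (x w', y w')) w := (hFz.comp w hφd :)
  have hGφ : DifferentiableAt ℝ (fun w' => G (x w', y w')) w := (hGz.comp w hφd :)
  have dxu : DifferentiableAt ℝ (fun w' => fderiv ℝ x w' (1, 0)) w :=
    hx'.clm_apply (differentiableAt_const _)
  have dxv : DifferentiableAt ℝ (fun w' => fderiv ℝ x w' (0, 1)) w :=
    hx'.clm_apply (differentiableAt_const _)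
  have dyu : DifferentiableAt ℝ (fun w' => fderiv ℝ y w' (1, 0)) w :=
    hy'.clm_apply (differentiableAt_const _)
  have dyv : DifferentiableAt ℝ (fun w' => fderiv ℝ y w' (0, 1)) w :=
    hy'.clm_apply (differentiableAt_const _)
  -- notation for first and second derivatives
  set a := fderiv ℝ x w (1, 0)
  set b := fderiv ℝ x w (0, 1)
  set c := fderiv ℝ y w (1, 0)
  set d := fderiv ℝ y w (0, 1)
  -- derivative of F ∘ φ
  have dFφ : ∀ u : ℝ × ℝ, fderiv ℝ (fun w' => F (x w', y w')) w u
      = fderiv ℝ x w u * fderiv ℝ F (x w, y w) (1, 0)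
        + fderiv ℝ y w u * fderiv ℝ F (x w, y w) (0, 1) := by
    intro u
    have hcomp : (fun w' => F (x w', y w')) = F ∘ (fun w' => (x w', y w')) := rfl
    rw [hcomp, fderiv_comp w hFz hφd, ContinuousLinearMap.comp_apply, hφ,
      ContinuousLinearMap.prod_apply, heinz_clm_pair]
  have dGφ : ∀ u : ℝ × ℝ, fderiv ℝ (fun w' => G (x w', y w')) w u
      = fderiv ℝ x w u * fderiv ℝ G (x w, y w) (1, 0)
        + fderiv ℝ y w u * fderiv ℝ G (x w, y w) (0, 1) := by
    intro u
    have hcomp : (fun w' => G (x w', y w')) = G ∘ (fun w' => (x w', y w')) := rfl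
    rw [hcomp, fderiv_comp w hGz hφd, ContinuousLinearMap.comp_apply, hφ,
      ContinuousLinearMap.prod_apply, heinz_clm_pair]
  -- differentiate eq1 in direction (1,0)
  have E1 : (fun w' => fderiv ℝ x w' (1, 0)) =ᶠ[nhds w]
      (fun w' => F (x w', y w') * fderiv ℝ x w' (0, 1)
        + G (x w', y w') * fderiv ℝ y w' (0, 1)) := by
    filter_upwards [hΩ.mem_nhds hw] with w' hw' using eq1 w' hw'
  have E2 : (fun w' => fderiv ℝ x w' (0, 1)) =ᶠ[nhds w]
      (fun w' => -(F (x w', y w') * fderiv ℝ x w' (1, 0))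
        - G (x w', y w') * fderiv ℝ y w' (1, 0)) := by
    filter_upwards [hΩ.mem_nhds hw] with w' hw' using eq2 w' hw'
  have key1 : fderiv ℝ (fun w' => fderiv ℝ x w' (1, 0)) w (1, 0)
      = (a * fderiv ℝ F (x w, y w) (1, 0) + c * fderiv ℝ F (x w, y w) (0, 1)) * b
        + F (x w, y w) * fderiv ℝ (fderiv ℝ x) w (1, 0) (0, 1)
        + ((a * fderiv ℝ G (x w, y w) (1, 0) + c * fderiv ℝ G (x w, y w) (0, 1)) * d
        + G (x w, y w) * fderiv ℝ (fderiv ℝ y) w (1, 0) (0, 1)) := by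
    rw [E1.fderiv_eq, fderiv_fun_add (hFφ.fun_mul dxv) (hGφ.fun_mul dyv), ContinuousLinearMap.add_apply,
      heinz_fderiv_mul_apply hFφ dxv, heinz_fderiv_mul_apply hGφ dyv,
      dFφ, dGφ, heinz_fderiv_apply_const hx', heinz_fderiv_apply_const hy']
  have key2 : fderiv ℝ (fun w' => fderiv ℝ x w' (0, 1)) w (0, 1)
      = -((b * fderiv ℝ F (x w, y w) (1, 0) + d * fderiv ℝ F (x w, y w) (0, 1)) * a
          + F (x w, y w) * fderiv ℝ (fderiv ℝ x) w (0, 1) (1, 0))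
        - ((b * fderiv ℝ G (x w, y w) (1, 0) + d * fderiv ℝ G (x w, y w) (0, 1)) * c
          + G (x w, y w) * fderiv ℝ (fderiv ℝ y) w (0, 1) (1, 0)) := by
    rw [E2.fderiv_eq, fderiv_fun_sub (hFφ.fun_mul dxu).fun_neg (hGφ.fun_mul dyu), ContinuousLinearMap.sub_apply,
      fderiv_fun_neg, ContinuousLinearMap.neg_apply,
      heinz_fderiv_mul_apply hFφ dxu, heinz_fderiv_mul_apply hGφ dyu,
      dFφ, dGφ, heinz_fderiv_apply_const hx', heinz_fderiv_apply_const hy']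
  -- symmetry of second derivatives
  have symx : fderiv ℝ (fderiv ℝ x) w (1, 0) (0, 1) = fderiv ℝ (fderiv ℝ x) w (0, 1) (1, 0) :=
    (hxw.isSymmSndFDerivAt (by simp)) _ _
  have symy : fderiv ℝ (fderiv ℝ y) w (1, 0) (0, 1) = fderiv ℝ (fderiv ℝ y) w (0, 1) (1, 0) :=
    (hyw.isSymmSndFDerivAt (by simp)) _ _
  rw [key1, key2, symx, symy]
  ring
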